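/- (Optimal subset coupling.) Let α ≥ 1, δ ≥ 0, let μ₁, μ₂ be sub-distributions over A₁, A₂ of equal weight, and let S₁ ⊆ A₁, S₂ ⊆ A₂. Then μ₁(S₁) ≤ α·μ₂(S₂) + δ and μ₁(A₁∖S₁) ≤ α·μ₂(A₂∖S₂) + δ hold if and only if there exists a (ln α, δ)-approximate lifting of the relation {(a₁,a₂) : a₁ ∈ S₁ ↔ a₂ ∈ S₂} relating μ₁ and μ₂. -/

import Mathlib

open scoped ENNReal

noncomputable section

/-- A discrete sub-distribution: total mass at most 1. -/
def IsSubDist {A : Type*} (μ : A → ℝ≥0∞) : Prop := ∑' a, μ a ≤ 1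

/-- Mass of a set under `μ`. -/
def setSum {A : Type*} (μ : A → ℝ≥0∞) (S : Set A) : ℝ≥0∞ := ∑' a : S, μ (a : A)

/-- `μ` is a coupling of `(μ₁, μ₂)`: a joint sub-distribution with the given marginals. -/
def IsCoupling {A₁ A₂ : Type*} (μ : A₁ × A₂ → ℝ≥0∞)
    (μ₁ : A₁ → ℝ≥0∞) (μ₂ : A₂ → ℝ≥0∞) : Prop :=
  IsSubDist μ ∧ (∀ a₁, ∑' a₂, μ (a₁, a₂) = μ₁ a₁) ∧ (∀ a₂, ∑' a₁, μ (a₁, a₂) = μ₂ a₂)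

/-- Image of a set under a relation. -/
def relImage {A₁ A₂ : Type*} (R : Set (A₁ × A₂)) (S : Set A₁) : Set A₂ :=
  {a₂ | ∃ a₁ ∈ S, (a₁, a₂) ∈ R}

/-- `R⋆ = R ∪ (A₁ × {⋆}) ∪ ({⋆} × A₂)`, with `⋆` modelled by `none`. -/
def starRel {A₁ A₂ : Type*} (R : Set (A₁ × A₂)) : Set (Option A₁ × Option A₂) :=
  {p | match p with
       | (some a₁, some a₂) => (a₁, a₂) ∈ R
       | (some _, none) => True
       | (none, some _) => True
       | (none, none) => False}

/-- `(ε, δ)`-approximate `R`-lifting of `(μ₁, μ₂)`, witnessed by two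
sub-distributions over `A₁⋆ × A₂⋆` with marginal, support, and ε-distance conditions. -/
def ApproxLift {A₁ A₂ : Type*} (ε δ : ℝ) (R : Set (A₁ × A₂))
    (μ₁ : A₁ → ℝ≥0∞) (μ₂ : A₂ → ℝ≥0∞) : Prop :=
  ∃ μL μR : Option A₁ × Option A₂ → ℝ≥0∞,
    IsSubDist μL ∧ IsSubDist μR ∧
    (∀ a₁, ∑' o, μL (some a₁, o) = μ₁ a₁) ∧ (∀ o, μL (none, o) = 0) ∧
    (∀ a₂, ∑' o, μR (o, some a₂) = μ₂ a₂) ∧ (∀ o, μR (o, none) = 0) ∧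
    {p | μL p ≠ 0} ⊆ starRel R ∧ {p | μR p ≠ 0} ⊆ starRel R ∧
    ∀ S : Set (Option A₁ × Option A₂),
      setSum μL S ≤ ENNReal.ofReal (Real.exp ε) * setSum μR S + ENNReal.ofReal δ


section OSCAux

open Set

private lemma osc_option_tsum {β : Type*} (f : Option β → ℝ≥0∞) :
    ∑' o, f o = f none + ∑' b, f (some b) := by
  have h := (Summable.tsum_add_tsum_compl (s := Set.range (some : β → Option β)) (f := f)
    ENNReal.summable ENNReal.summable)
  rw [tsum_range f (Option.some_injective β), Set.compl_range_some] at h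
  rw [← h, tsum_singleton, add_comm]

private lemma osc_tsum_subtype_le {A : Type*} (μ : A → ℝ≥0∞) (S : Set A) :
    setSum μ S ≤ ∑' a, μ a :=
  ENNReal.tsum_comp_le_tsum_of_injective Subtype.val_injective μ

private lemma osc_dist_of_pointwise {β : Type*} (μL μR ν : β → ℝ≥0∞) (c d : ℝ≥0∞)
    (h : ∀ p, μL p ≤ c * μR p + ν p) (hν : ∑' p, ν p ≤ d) (U : Set β) :
    setSum μL U ≤ c * setSum μR U + d := by
  calc setSum μL U ≤ ∑' p : U, (c * μR p + ν p) := ENNReal.tsum_le_tsum fun p => h p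
  _ = c * setSum μR U + ∑' p : U, ν (p : β) := by
      rw [ENNReal.tsum_add, ENNReal.tsum_mul_left]; rfl
  _ ≤ c * setSum μR U + d := add_le_add_right (le_trans (osc_tsum_subtype_le ν U) hν) _

private lemma osc_bracket {m m' c : ℝ≥0∞} (hm0 : m ≠ 0) (hm : m ≠ ∞) (hm' : m' ≠ ∞)
    (hc : c ≠ ∞) :
    (m - min m (c * m')) / m + min m (c * m') / m * (m' / m') = 1 := by
  by_cases h0 : m' = 0
  · subst h0
    simp [ENNReal.div_self hm0 hm, hc]
  · rw [ENNReal.div_self h0 hm', mul_one, ENNReal.div_add_div_same,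
      tsub_add_cancel_of_le (min_le_left _ _), ENNReal.div_self hm0 hm]

private lemma osc_ratio_le {m m' c : ℝ≥0∞} : min m (c * m') / m' ≤ c := by
  calc min m (c * m') / m' ≤ c * m' / m' := ENNReal.div_le_div_right (min_le_right _ _) _
  _ = c * (m' / m') := by rw [mul_div_assoc]
  _ ≤ c * 1 := mul_le_mul_right ENNReal.div_self_le_one c
  _ = c := mul_one c

private lemma osc_mass_div_le {m e : ℝ≥0∞} : m * (e / m) ≤ e := by
  rw [div_eq_mul_inv, ← mul_assoc, mul_comm m e, mul_assoc]
  calc e * (m * m⁻¹) ≤ e * 1 := mul_le_mul_right (ENNReal.mul_inv_le_one m) e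
  _ = e := mul_one e

variable {A₁ A₂ : Type*}

/-- Left witness on one block. -/
private def oscL (ν₁ : A₁ → ℝ≥0∞) (ν₂ : A₂ → ℝ≥0∞) (c : ℝ≥0∞) :
    Option A₁ × Option A₂ → ℝ≥0∞
  | (some a₁, some a₂) =>
      ν₁ a₁ * (min (∑' a, ν₁ a) (c * ∑' a, ν₂ a) / ∑' a, ν₁ a) * (ν₂ a₂ / ∑' a, ν₂ a)
  | (some a₁, none) =>
      ν₁ a₁ * ((∑' a, ν₁ a - min (∑' a, ν₁ a) (c * ∑' a, ν₂ a)) / ∑' a, ν₁ a)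
  | (none, _) => 0

/-- Right witness on one block. -/
private def oscR (ν₁ : A₁ → ℝ≥0∞) (ν₂ : A₂ → ℝ≥0∞) :
    Option A₁ × Option A₂ → ℝ≥0∞
  | (some a₁, some a₂) => ν₁ a₁ / (∑' a, ν₁ a) * ν₂ a₂
  | (none, some a₂) => if (∑' a, ν₁ a) = 0 then ν₂ a₂ else 0
  | (_, none) => 0

variable (ν₁ : A₁ → ℝ≥0∞) (ν₂ : A₂ → ℝ≥0∞) (c : ℝ≥0∞)

private lemma oscL_none (o : Option A₂) : oscL ν₁ ν₂ c (none, o) = 0 := by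
  cases o <;> rfl

private lemma oscR_none (o : Option A₁) : oscR ν₁ ν₂ (o, none) = 0 := by
  cases o <;> rfl

private lemma oscL_margL (hm : (∑' a, ν₁ a) ≠ ∞) (hm' : (∑' a, ν₂ a) ≠ ∞) (hc : c ≠ ∞)
    (a₁ : A₁) : ∑' o, oscL ν₁ ν₂ c (some a₁, o) = ν₁ a₁ := by
  rw [osc_option_tsum]
  show ν₁ a₁ * ((∑' a, ν₁ a - min (∑' a, ν₁ a) (c * ∑' a, ν₂ a)) / ∑' a, ν₁ a)
      + (∑' a₂, ν₁ a₁ * (min (∑' a, ν₁ a) (c * ∑' a, ν₂ a) / ∑' a, ν₁ a)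
          * (ν₂ a₂ / ∑' a, ν₂ a)) = ν₁ a₁
  rw [ENNReal.tsum_mul_left (a := ν₁ a₁ * (min (∑' a, ν₁ a) (c * ∑' a, ν₂ a) / ∑' a, ν₁ a))]
  have h2 : ∑' a₂, ν₂ a₂ / (∑' a, ν₂ a) = (∑' a, ν₂ a) / (∑' a, ν₂ a) := by
    simp only [div_eq_mul_inv, ENNReal.tsum_mul_right]
  rw [h2]
  rcases eq_or_ne (ν₁ a₁) 0 with h | h
  · simp [h]
  · have hm0 : (∑' a, ν₁ a) ≠ 0 := fun h0 =>
      h (le_antisymm (le_trans (ENNReal.le_tsum a₁) (le_of_eq h0)) (zero_le))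
    rw [mul_assoc (ν₁ a₁), ← mul_add, osc_bracket hm0 hm hm' hc, mul_one]

private lemma oscL_total (hm : (∑' a, ν₁ a) ≠ ∞) (hm' : (∑' a, ν₂ a) ≠ ∞) (hc : c ≠ ∞) :
    ∑' p, oscL ν₁ ν₂ c p = ∑' a, ν₁ a := by
  rw [ENNReal.tsum_prod', osc_option_tsum]
  simp only [oscL_none, tsum_zero, zero_add]
  exact tsum_congr (oscL_margL ν₁ ν₂ c hm hm' hc)

private lemma oscR_margR (hm : (∑' a, ν₁ a) ≠ ∞) (a₂ : A₂) :
    ∑' o, oscR ν₁ ν₂ (o, some a₂) = ν₂ a₂ := by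
  rw [osc_option_tsum]
  show (if (∑' a, ν₁ a) = 0 then ν₂ a₂ else 0)
      + (∑' a₁, ν₁ a₁ / (∑' a, ν₁ a) * ν₂ a₂) = ν₂ a₂
  simp only [div_eq_mul_inv, ENNReal.tsum_mul_right]
  by_cases h0 : (∑' a, ν₁ a) = 0
  · simp [h0]
  · rw [if_neg h0, ENNReal.mul_inv_cancel h0 hm, one_mul, zero_add]

private lemma oscR_total (hm : (∑' a, ν₁ a) ≠ ∞) :
    ∑' p, oscR ν₁ ν₂ p = ∑' a, ν₂ a := by
  rw [ENNReal.tsum_prod', ENNReal.tsum_comm, osc_option_tsum]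
  simp only [oscR_none, tsum_zero, zero_add]
  exact tsum_congr (oscR_margR ν₁ ν₂ hm)

private lemma oscL_le_oscR (a₁ : A₁) (a₂ : A₂) :
    oscL ν₁ ν₂ c (some a₁, some a₂) ≤ c * oscR ν₁ ν₂ (some a₁, some a₂) := by
  show ν₁ a₁ * (min (∑' a, ν₁ a) (c * ∑' a, ν₂ a) / ∑' a, ν₁ a) * (ν₂ a₂ / ∑' a, ν₂ a)
      ≤ c * (ν₁ a₁ / (∑' a, ν₁ a) * ν₂ a₂)
  calc ν₁ a₁ * (min (∑' a, ν₁ a) (c * ∑' a, ν₂ a) / ∑' a, ν₁ a) * (ν₂ a₂ / ∑' a, ν₂ a)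
      = ν₁ a₁ / (∑' a, ν₁ a) * ν₂ a₂ * (min (∑' a, ν₁ a) (c * ∑' a, ν₂ a) / ∑' a, ν₂ a) := by
        simp only [div_eq_mul_inv]; ring
  _ ≤ ν₁ a₁ / (∑' a, ν₁ a) * ν₂ a₂ * c := mul_le_mul_right osc_ratio_le _
  _ = c * (ν₁ a₁ / (∑' a, ν₁ a) * ν₂ a₂) := mul_comm _ _

private lemma oscL_bad :
    ∑' a₁, oscL ν₁ ν₂ c (some a₁, none)
      ≤ (∑' a, ν₁ a) - min (∑' a, ν₁ a) (c * ∑' a, ν₂ a) := by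
  show (∑' a₁, ν₁ a₁ * ((∑' a, ν₁ a - min (∑' a, ν₁ a) (c * ∑' a, ν₂ a)) / ∑' a, ν₁ a)) ≤ _
  rw [ENNReal.tsum_mul_right]
  exact osc_mass_div_le

private lemma oscL_supp {a₁ : A₁} {a₂ : A₂}
    (h : oscL ν₁ ν₂ c (some a₁, some a₂) ≠ 0) : ν₁ a₁ ≠ 0 ∧ ν₂ a₂ ≠ 0 := by
  constructor <;> intro h0 <;> exact h (by simp [oscL, h0])

private lemma oscR_supp {a₁ : A₁} {a₂ : A₂}
    (h : oscR ν₁ ν₂ (some a₁, some a₂) ≠ 0) : ν₁ a₁ ≠ 0 ∧ ν₂ a₂ ≠ 0 := by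
  constructor <;> intro h0 <;> exact h (by simp [oscR, h0])

private lemma osc_back (μ₁ : A₁ → ℝ≥0∞) (μ₂ : A₂ → ℝ≥0∞)
    (μL μR : Option A₁ × Option A₂ → ℝ≥0∞) (c d : ℝ≥0∞)
    (R : Set (A₁ × A₂)) (T₁ : Set A₁) (T₂ : Set A₂)
    (hmargL : ∀ a₁, ∑' o, μL (some a₁, o) = μ₁ a₁)
    (hmargR : ∀ a₂, ∑' o, μR (o, some a₂) = μ₂ a₂)
    (hnoneR : ∀ o, μR (o, none) = 0)
    (hsupR : {p | μR p ≠ 0} ⊆ starRel R)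
    (hT : ∀ a₁ a₂, a₁ ∈ T₁ → (a₁, a₂) ∈ R → a₂ ∈ T₂)
    (hdist : ∀ U, setSum μL U ≤ c * setSum μR U + d) :
    setSum μ₁ T₁ ≤ c * setSum μ₂ T₂ + d := by
  set U : Set (Option A₁ × Option A₂) := {p | ∃ a₁ ∈ T₁, p.1 = some a₁} with hU
  set W : Set (Option A₁ × Option A₂) := {p | ∃ a₂ ∈ T₂, p.2 = some a₂} with hW
  have step1 : setSum μ₁ T₁ ≤ setSum μL U := by
    have h1 : setSum μ₁ T₁ = ∑' p : (↥T₁ × Option A₂), μL (some (p.1 : A₁), p.2) := by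
      refine Eq.trans ?_
        (ENNReal.tsum_prod (f := fun (a : ↥T₁) (o : Option A₂) => μL (some (a : A₁), o))).symm
      exact tsum_congr fun a₁ => (hmargL (a₁ : A₁)).symm
    rw [h1]
    have hinj : Function.Injective
        (fun p : ↥T₁ × Option A₂ => (⟨(some (p.1 : A₁), p.2), ⟨p.1, p.1.2, rfl⟩⟩ : U)) := by
      rintro ⟨a, o⟩ ⟨a', o'⟩ h
      simp only [Subtype.mk.injEq, Prod.mk.injEq, Option.some.injEq] at h
      exact Prod.ext (Subtype.ext h.1) h.2
    exact ENNReal.tsum_comp_le_tsum_of_injective hinj (fun u => μL u)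
  have step2a : setSum μL U ≤ c * setSum μR W + d := by
    refine le_trans (hdist U) (add_le_add_left (mul_le_mul_right ?_ c) d)
    rw [setSum, setSum, tsum_subtype, tsum_subtype]
    refine ENNReal.tsum_le_tsum fun p => ?_
    by_cases hp : p ∈ U
    · obtain ⟨o₁, o₂⟩ := p
      rw [indicator_of_mem hp]
      rcases eq_or_ne (μR (o₁, o₂)) 0 with h0 | h0
      · rw [h0]; exact zero_le
      · obtain ⟨a₁, ha₁, hp1⟩ := hp
        have ho₁ : o₁ = some a₁ := hp1
        subst ho₁
        cases o₂ with
        | none => exact absurd (hnoneR _) h0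
        | some a₂ =>
          have hR : (a₁, a₂) ∈ R := hsupR h0
          rw [indicator_of_mem
            (show ((some a₁ : Option A₁), (some a₂ : Option A₂)) ∈ W from
              ⟨a₂, hT a₁ a₂ ha₁ hR, rfl⟩)]
    · rw [indicator_of_notMem hp]; exact zero_le
  have step2b : setSum μR W ≤ setSum μ₂ T₂ := by
    rw [setSum, tsum_subtype, ENNReal.tsum_prod', ENNReal.tsum_comm]
    have hptw : ∀ o₂ : Option A₂,
        (∑' o₁, W.indicator μR (o₁, o₂))
          ≤ ((some '' T₂)).indicator (fun o => ∑' o₁, μR (o₁, o)) o₂ := by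
      intro o₂
      by_cases ho : o₂ ∈ some '' T₂
      · rw [indicator_of_mem ho]
        exact ENNReal.tsum_le_tsum fun o₁ => indicator_le_self _ _ _
      · rw [indicator_of_notMem ho]
        have : ∀ o₁, W.indicator μR (o₁, o₂) = 0 := by
          intro o₁
          refine indicator_of_notMem (fun hmem => ho ?_) _
          obtain ⟨a₂, ha₂, h2⟩ := hmem
          exact ⟨a₂, ha₂, h2.symm⟩
        simp [this]
    refine le_trans (ENNReal.tsum_le_tsum hptw) ?_
    rw [← tsum_subtype,
      tsum_image (fun o => ∑' o₁, μR (o₁, o)) ((Option.some_injective A₂).injOn)]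
    rw [setSum]
    exact le_of_eq (tsum_congr fun a₂ => hmargR a₂)
  calc setSum μ₁ T₁ ≤ setSum μL U := step1
  _ ≤ c * setSum μR W + d := step2a
  _ ≤ c * setSum μ₂ T₂ + d := add_le_add_left (mul_le_mul_right step2b c) d

end OSCAux

theorem optimal_subset_coupling {A₁ A₂ : Type*} [Countable A₁] [Countable A₂]
    (μ₁ : A₁ → ℝ≥0∞) (μ₂ : A₂ → ℝ≥0∞)
    (h₁ : IsSubDist μ₁) (h₂ : IsSubDist μ₂)
    (hw : ∑' a, μ₁ a = ∑' a, μ₂ a)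
    (S₁ : Set A₁) (S₂ : Set A₂) (α δ : ℝ) (hα : 1 ≤ α) (hδ : 0 ≤ δ) :
    (setSum μ₁ S₁ ≤ ENNReal.ofReal α * setSum μ₂ S₂ + ENNReal.ofReal δ ∧
      setSum μ₁ S₁ᶜ ≤ ENNReal.ofReal α * setSum μ₂ S₂ᶜ + ENNReal.ofReal δ) ↔
      ApproxLift (Real.log α) δ {p : A₁ × A₂ | p.1 ∈ S₁ ↔ p.2 ∈ S₂} μ₁ μ₂ := by
  classical
  have hα0 : (0:ℝ) < α := lt_of_lt_of_le one_pos hα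
  have hexp : ENNReal.ofReal (Real.exp (Real.log α)) = ENNReal.ofReal α := by
    rw [Real.exp_log hα0]
  set c : ℝ≥0∞ := ENNReal.ofReal α with hcdef
  have hc : c ≠ ∞ := ENNReal.ofReal_ne_top
  have hc1 : (1:ℝ≥0∞) ≤ c := by
    rw [hcdef, ← ENNReal.ofReal_one]
    exact ENNReal.ofReal_le_ofReal hα
  constructor
  · rintro ⟨hyp1, hyp2⟩
    set I₁ : A₁ → ℝ≥0∞ := S₁.indicator μ₁ with hI₁def
    set I₁c : A₁ → ℝ≥0∞ := S₁ᶜ.indicator μ₁ with hI₁cdef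
    set I₂ : A₂ → ℝ≥0∞ := S₂.indicator μ₂ with hI₂def
    set I₂c : A₂ → ℝ≥0∞ := S₂ᶜ.indicator μ₂ with hI₂cdef
    have hI₁ : (∑' a, I₁ a) = setSum μ₁ S₁ := (tsum_subtype S₁ μ₁).symm
    have hI₁c : (∑' a, I₁c a) = setSum μ₁ S₁ᶜ := (tsum_subtype S₁ᶜ μ₁).symm
    have hI₂ : (∑' a, I₂ a) = setSum μ₂ S₂ := (tsum_subtype S₂ μ₂).symm
    have hI₂c : (∑' a, I₂c a) = setSum μ₂ S₂ᶜ := (tsum_subtype S₂ᶜ μ₂).symm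
    have hsplit₁ : (∑' a, I₁ a) + (∑' a, I₁c a) = ∑' a, μ₁ a := by
      rw [← ENNReal.tsum_add]
      exact tsum_congr fun a => Set.indicator_self_add_compl_apply S₁ μ₁ a
    have hsplit₂ : (∑' a, I₂ a) + (∑' a, I₂c a) = ∑' a, μ₂ a := by
      rw [← ENNReal.tsum_add]
      exact tsum_congr fun a => Set.indicator_self_add_compl_apply S₂ μ₂ a
    have hfin : ∀ x : ℝ≥0∞, x ≤ 1 → x ≠ ∞ :=
      fun x hx => (lt_of_le_of_lt hx ENNReal.one_lt_top).ne
    have hm₁ : (∑' a, I₁ a) ≠ ∞ :=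
      hfin _ (le_trans (le_trans le_self_add (le_of_eq hsplit₁)) h₁)
    have hn₁ : (∑' a, I₁c a) ≠ ∞ :=
      hfin _ (le_trans (le_trans le_add_self (le_of_eq hsplit₁)) h₁)
    have hm₂ : (∑' a, I₂ a) ≠ ∞ :=
      hfin _ (le_trans (le_trans le_self_add (le_of_eq hsplit₂)) h₂)
    have hn₂ : (∑' a, I₂c a) ≠ ∞ :=
      hfin _ (le_trans (le_trans le_add_self (le_of_eq hsplit₂)) h₂)
    refine ⟨fun p => oscL I₁ I₂ c p + oscL I₁c I₂c c p,
      fun p => oscR I₁ I₂ p + oscR I₁c I₂c p, ?_, ?_, ?_, ?_, ?_, ?_, ?_, ?_, ?_⟩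
    · show (∑' p, (oscL I₁ I₂ c p + oscL I₁c I₂c c p)) ≤ 1
      rw [ENNReal.tsum_add, oscL_total I₁ I₂ c hm₁ hm₂ hc, oscL_total I₁c I₂c c hn₁ hn₂ hc,
        hsplit₁]
      exact h₁
    · show (∑' p, (oscR I₁ I₂ p + oscR I₁c I₂c p)) ≤ 1
      rw [ENNReal.tsum_add, oscR_total I₁ I₂ hm₁, oscR_total I₁c I₂c hn₁, hsplit₂]
      exact h₂
    · intro a₁
      rw [ENNReal.tsum_add, oscL_margL I₁ I₂ c hm₁ hm₂ hc a₁,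
        oscL_margL I₁c I₂c c hn₁ hn₂ hc a₁]
      exact Set.indicator_self_add_compl_apply S₁ μ₁ a₁
    · intro o
      show oscL I₁ I₂ c (none, o) + oscL I₁c I₂c c (none, o) = 0
      rw [oscL_none, oscL_none, add_zero]
    · intro a₂
      rw [ENNReal.tsum_add, oscR_margR I₁ I₂ hm₁ a₂, oscR_margR I₁c I₂c hn₁ a₂]
      exact Set.indicator_self_add_compl_apply S₂ μ₂ a₂
    · intro o
      show oscR I₁ I₂ (o, none) + oscR I₁c I₂c (o, none) = 0
      rw [oscR_none, oscR_none, add_zero]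
    · rintro ⟨o₁, o₂⟩ hp
      cases o₁ with
      | none =>
        exact absurd (by simp only [oscL_none, add_zero]) hp
      | some a₁ =>
        cases o₂ with
        | none => exact trivial
        | some a₂ =>
          rcases eq_or_ne (oscL I₁ I₂ c (some a₁, some a₂)) 0 with h1 | h1
          · have h2 : oscL I₁c I₂c c (some a₁, some a₂) ≠ 0 := by
              intro h2; exact hp (by simp only [h1, h2, add_zero])
            obtain ⟨hI1, hI2⟩ := oscL_supp I₁c I₂c c h2
            have ha₁ : a₁ ∈ S₁ᶜ := Set.mem_of_indicator_ne_zero hI1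
            have ha₂ : a₂ ∈ S₂ᶜ := Set.mem_of_indicator_ne_zero hI2
            show a₁ ∈ S₁ ↔ a₂ ∈ S₂
            exact iff_of_false ha₁ ha₂
          · obtain ⟨hI1, hI2⟩ := oscL_supp I₁ I₂ c h1
            have ha₁ : a₁ ∈ S₁ := Set.mem_of_indicator_ne_zero hI1
            have ha₂ : a₂ ∈ S₂ := Set.mem_of_indicator_ne_zero hI2
            show a₁ ∈ S₁ ↔ a₂ ∈ S₂
            exact iff_of_true ha₁ ha₂
    · rintro ⟨o₁, o₂⟩ hp
      cases o₂ with
      | none =>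
        exact absurd (by simp only [oscR_none, add_zero]) hp
      | some a₂ =>
        cases o₁ with
        | none => exact trivial
        | some a₁ =>
          rcases eq_or_ne (oscR I₁ I₂ (some a₁, some a₂)) 0 with h1 | h1
          · have h2 : oscR I₁c I₂c (some a₁, some a₂) ≠ 0 := by
              intro h2; exact hp (by simp only [h1, h2, add_zero])
            obtain ⟨hI1, hI2⟩ := oscR_supp I₁c I₂c h2
            have ha₁ : a₁ ∈ S₁ᶜ := Set.mem_of_indicator_ne_zero hI1
            have ha₂ : a₂ ∈ S₂ᶜ := Set.mem_of_indicator_ne_zero hI2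
            show a₁ ∈ S₁ ↔ a₂ ∈ S₂
            exact iff_of_false ha₁ ha₂
          · obtain ⟨hI1, hI2⟩ := oscR_supp I₁ I₂ h1
            have ha₁ : a₁ ∈ S₁ := Set.mem_of_indicator_ne_zero hI1
            have ha₂ : a₂ ∈ S₂ := Set.mem_of_indicator_ne_zero hI2
            show a₁ ∈ S₁ ↔ a₂ ∈ S₂
            exact iff_of_true ha₁ ha₂
    · -- distance condition
      intro U
      rw [hexp]
      set μL : Option A₁ × Option A₂ → ℝ≥0∞ :=
        fun p => oscL I₁ I₂ c p + oscL I₁c I₂c c p with hμLdef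
      set νbad : Option A₁ × Option A₂ → ℝ≥0∞ :=
        fun p => if p.2 = none then μL p else 0 with hνdef
      have hpt : ∀ p, μL p ≤ c * (oscR I₁ I₂ p + oscR I₁c I₂c p) + νbad p := by
        rintro ⟨o₁, o₂⟩
        cases o₁ with
        | none =>
          have : μL (none, o₂) = 0 := by
            show oscL I₁ I₂ c (none, o₂) + oscL I₁c I₂c c (none, o₂) = 0
            rw [oscL_none, oscL_none, add_zero]
          rw [this]; exact zero_le
        | some a₁ =>
          cases o₂ with
          | none =>
            have hν : νbad (some a₁, none) = μL (some a₁, none) := if_pos rfl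
            rw [hν]
            exact self_le_add_left _ _
          | some a₂ =>
            have hν : νbad (some a₁, some a₂) = 0 := if_neg (by simp)
            rw [hν, add_zero, mul_add]
            exact add_le_add (oscL_le_oscR I₁ I₂ c a₁ a₂) (oscL_le_oscR I₁c I₂c c a₁ a₂)
      have hνsum : (∑' p, νbad p) ≤ ENNReal.ofReal δ := by
        set e : ℝ≥0∞ := (∑' a, I₁ a) - min (∑' a, I₁ a) (c * ∑' a, I₂ a) with hedef
        set f : ℝ≥0∞ := (∑' a, I₁c a) - min (∑' a, I₁c a) (c * ∑' a, I₂c a) with hfdef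
        have he : e ≤ ENNReal.ofReal δ := by
          rw [hedef, tsub_le_iff_left]
          rcases min_cases (∑' a, I₁ a) (c * ∑' a, I₂ a) with ⟨hmin, _⟩ | ⟨hmin, _⟩
          · rw [hmin]; exact le_self_add
          · rw [hmin, add_comm, hI₁, hI₂]
            exact le_trans hyp1 (le_of_eq (add_comm _ _))
        have hf : f ≤ ENNReal.ofReal δ := by
          rw [hfdef, tsub_le_iff_left]
          rcases min_cases (∑' a, I₁c a) (c * ∑' a, I₂c a) with ⟨hmin, _⟩ | ⟨hmin, _⟩
          · rw [hmin]; exact le_self_add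
          · rw [hmin, add_comm, hI₁c, hI₂c]
            exact le_trans hyp2 (le_of_eq (add_comm _ _))
        have hef : e = 0 ∨ f = 0 := by
          by_contra hcon
          push_neg at hcon
          obtain ⟨he0, hf0⟩ := hcon
          have h1 : c * (∑' a, I₂ a) < ∑' a, I₁ a := by
            have : min (∑' a, I₁ a) (c * ∑' a, I₂ a) < ∑' a, I₁ a :=
              lt_of_not_ge fun hle => he0 (tsub_eq_zero_of_le hle)
            exact (min_lt_iff.mp this).resolve_left (lt_irrefl _)
          have h2 : c * (∑' a, I₂c a) < ∑' a, I₁c a := by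
            have : min (∑' a, I₁c a) (c * ∑' a, I₂c a) < ∑' a, I₁c a :=
              lt_of_not_ge fun hle => hf0 (tsub_eq_zero_of_le hle)
            exact (min_lt_iff.mp this).resolve_left (lt_irrefl _)
          have h3 : (∑' a, I₂ a) < ∑' a, I₁ a :=
            lt_of_le_of_lt (le_mul_of_one_le_left (zero_le) hc1) h1
          have h4 : (∑' a, I₂c a) < ∑' a, I₁c a :=
            lt_of_le_of_lt (le_mul_of_one_le_left (zero_le) hc1) h2
          have h5 : (∑' a, I₂ a) + (∑' a, I₂c a) < (∑' a, I₁ a) + (∑' a, I₁c a) :=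
            ENNReal.add_lt_add h3 h4
          rw [hsplit₁, hsplit₂, hw] at h5
          exact lt_irrefl _ h5
        have hsum : (∑' p, νbad p) ≤ e + f := by
          have hcalc : (∑' p, νbad p) = ∑' a₁, μL (some a₁, none) := by
            rw [ENNReal.tsum_prod']
            have hinner : ∀ o₁ : Option A₁,
                (∑' o₂, νbad (o₁, o₂)) = νbad (o₁, none) := by
              intro o₁
              rw [osc_option_tsum]
              have : ∀ b : A₂, νbad (o₁, some b) = 0 := fun b => if_neg (by simp)
              simp [this]
            rw [tsum_congr hinner, osc_option_tsum]
            have hnone : νbad ((none : Option A₁), (none : Option A₂)) = 0 := by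
              show (if True then μL (none, none) else 0) = 0
              rw [if_pos trivial]
              show oscL I₁ I₂ c (none, none) + oscL I₁c I₂c c (none, none) = 0
              rw [oscL_none, oscL_none, add_zero]
            rw [hnone, zero_add]
            exact tsum_congr fun a₁ => if_pos rfl
          rw [hcalc]
          have : (∑' a₁, μL (some a₁, none))
              = (∑' a₁, oscL I₁ I₂ c (some a₁, none))
                + ∑' a₁, oscL I₁c I₂c c (some a₁, none) := ENNReal.tsum_add
          rw [this]
          exact add_le_add (oscL_bad I₁ I₂ c) (oscL_bad I₁c I₂c c)
        refine le_trans hsum ?_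
        rcases hef with h0 | h0
        · rw [h0, zero_add]; exact hf
        · rw [h0, add_zero]; exact he
      exact osc_dist_of_pointwise μL _ νbad c (ENNReal.ofReal δ) hpt hνsum U
  · rintro ⟨μL, μR, hsubL, hsubR, hmargL, hnoneL, hmargR, hnoneR, hsupL, hsupR, hdist⟩
    simp only [hexp] at hdist
    constructor
    · exact osc_back μ₁ μ₂ μL μR c (ENNReal.ofReal δ) _ S₁ S₂ hmargL hmargR hnoneR hsupR
        (fun a₁ a₂ h hRm => hRm.mp h) hdist
    · exact osc_back μ₁ μ₂ μL μR c (ENNReal.ofReal δ) _ S₁ᶜ S₂ᶜ hmargL hmargR hnoneR hsupR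
        (fun a₁ a₂ h hRm h2 => h (hRm.mpr h2)) hdist
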